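/- arXiv:2012.14181 — 8 statements merged into one kernel-verified Lean document; each statement's English description precedes it below -/
import Mathlib

section
/- Let G be an abelian group and let P₁, P₂ be the positive cones of two partial orders on G (i.e., P₁∩P₁⁻¹={1}, P₁P₁⊆P₁, and likewise for P₂). If P₁∩P₂⁻¹={1}, then the set P₁∪P₂∪P₁P₂ is the positive cone of a partial order on G, i.e., it is closed under multiplication and its intersection with its set of inverses is {1}. -/
open Pointwise

theorem stmt_0 {G : Type*} [CommGroup G] (P₁ P₂ : Set G)
    (h1m : P₁ * P₁ ⊆ P₁) (h1i : P₁ ∩ P₁⁻¹ = {1})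
    (h2m : P₂ * P₂ ⊆ P₂) (h2i : P₂ ∩ P₂⁻¹ = {1})
    (h12 : P₁ ∩ P₂⁻¹ = {1}) :
    (P₁ ∪ P₂ ∪ P₁ * P₂) * (P₁ ∪ P₂ ∪ P₁ * P₂) ⊆ P₁ ∪ P₂ ∪ P₁ * P₂ ∧
    (P₁ ∪ P₂ ∪ P₁ * P₂) ∩ (P₁ ∪ P₂ ∪ P₁ * P₂)⁻¹ = {1} := by
  have one1 : (1 : G) ∈ P₁ := by
    have h : (1 : G) ∈ P₁ ∩ P₁⁻¹ := by rw [h1i]; rfl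
    exact h.1
  have one2 : (1 : G) ∈ P₂ := by
    have h : (1 : G) ∈ P₂ ∩ P₂⁻¹ := by rw [h2i]; rfl
    exact h.1
  have decomp : ∀ x ∈ P₁ ∪ P₂ ∪ P₁ * P₂, ∃ p ∈ P₁, ∃ q ∈ P₂, p * q = x := by
    rintro x ((hx | hx) | hx)
    · exact ⟨x, hx, 1, one2, mul_one x⟩
    · exact ⟨1, one1, x, hx, one_mul x⟩
    · exact hx
  constructor
  · rintro x hx
    obtain ⟨z, hz, w, hw, rfl⟩ := hx
    obtain ⟨p, hp, q, hq, rfl⟩ := decomp z hz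
    obtain ⟨r, hr, s, hs, rfl⟩ := decomp w hw
    exact Or.inr ⟨p * r, h1m (Set.mul_mem_mul hp hr), q * s,
      h2m (Set.mul_mem_mul hq hs), mul_mul_mul_comm p r q s⟩
  · ext x
    simp only [Set.mem_inter_iff, Set.mem_inv, Set.mem_singleton_iff]
    constructor
    · rintro ⟨hx, hxi⟩
      obtain ⟨p, hp, q, hq, hpq⟩ := decomp x hx
      obtain ⟨r, hr, s, hs, hrs⟩ := decomp x⁻¹ hxi
      have key : (p * r) * (q * s) = 1 := by
        rw [mul_mul_mul_comm, hpq, hrs, mul_inv_cancel]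
      have hinv : (p * r)⁻¹ = q * s := inv_eq_of_mul_eq_one_right key
      have hpr : p * r ∈ P₁ ∩ P₂⁻¹ := by
        refine ⟨h1m (Set.mul_mem_mul hp hr), ?_⟩
        rw [Set.mem_inv, hinv]
        exact h2m (Set.mul_mem_mul hq hs)
      rw [h12, Set.mem_singleton_iff] at hpr
      have hr1 : r = p⁻¹ := eq_inv_of_mul_eq_one_right hpr
      have hp1 : p ∈ P₁ ∩ P₁⁻¹ := ⟨hp, by rw [Set.mem_inv, ← hr1]; exact hr⟩
      rw [h1i, Set.mem_singleton_iff] at hp1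
      have hrone : r = 1 := by rw [hr1, hp1, inv_one]
      have hxq : x = q := by rw [← hpq, hp1, one_mul]
      have hxs : x⁻¹ = s := by rw [← hrs, hrone, one_mul]
      have : x ∈ P₂ ∩ P₂⁻¹ := ⟨hxq ▸ hq, by rw [Set.mem_inv, hxs]; exact hs⟩
      rw [h2i, Set.mem_singleton_iff] at this
      exact this
    · rintro rfl
      exact ⟨Or.inl (Or.inl one1), by rw [inv_one]; exact Or.inl (Or.inl one1)⟩
end

section
/- Let G be an abelian group and P₁, P₂ positive cones of partial orders on G. There exists a smallest positive cone on G containing both P₁ and P₂ if and only if P₁ ∩ P₂⁻¹ = {1}; in that case the smallest such cone equals P₁ ∪ P₂ ∪ P₁P₂. -/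
open Pointwise

/-- `P` is the positive cone of a partial order on the abelian group `G`. -/
def IsPosCone {G : Type*} [CommGroup G] (P : Set G) : Prop :=
  P * P ⊆ P ∧ P ∩ P⁻¹ = {1}

lemma one_mem_of_isPosCone {G : Type*} [CommGroup G] {P : Set G}
    (h : IsPosCone P) : (1 : G) ∈ P := by
  have : (1 : G) ∈ P ∩ P⁻¹ := by rw [h.2]; rfl
  exact this.1

lemma mul_isPosCone {G : Type*} [CommGroup G] {P₁ P₂ : Set G}
    (h1 : IsPosCone P₁) (h2 : IsPosCone P₂) (hint : P₁ ∩ P₂⁻¹ = {1}) :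
    IsPosCone (P₁ * P₂) := by
  constructor
  · have : (P₁ * P₂) * (P₁ * P₂) = (P₁ * P₁) * (P₂ * P₂) := mul_mul_mul_comm _ _ _ _
    rw [this]
    exact Set.mul_subset_mul h1.1 h2.1
  · ext x
    simp only [Set.mem_singleton_iff]
    constructor
    · rintro ⟨hx, hxinv⟩
      obtain ⟨a, ha, b, hb, hab⟩ := hx
      obtain ⟨a', ha', b', hb', hab'⟩ := Set.mem_inv.mp hxinv
      simp only at hab hab'
      have key : a * a' * (b * b') = 1 := by
        have h' : (a * b) * (a' * b') = 1 := by rw [hab, hab']; simp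
        calc a * a' * (b * b') = (a * b) * (a' * b') := by
              rw [mul_mul_mul_comm]
          _ = 1 := h'
      have hbb : b * b' ∈ P₂ := h2.1 (Set.mul_mem_mul hb hb')
      have haa1 : a * a' ∈ P₁ := h1.1 (Set.mul_mem_mul ha ha')
      have haa2 : a * a' ∈ P₂⁻¹ := by
        rw [Set.mem_inv, inv_eq_of_mul_eq_one_right key]
        exact hbb
      have haa : a * a' = 1 := by
        have : a * a' ∈ ({1} : Set G) := hint ▸ ⟨haa1, haa2⟩
        exact this
      have hbbone : b * b' = 1 := by
        rw [haa, one_mul] at key; exact key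
      have ha1 : a = 1 := by
        have : a ∈ P₁ ∩ P₁⁻¹ := ⟨ha, by
          rw [Set.mem_inv, inv_eq_of_mul_eq_one_right haa]; exact ha'⟩
        rw [h1.2] at this; exact this
      have hb1 : b = 1 := by
        have : b ∈ P₂ ∩ P₂⁻¹ := ⟨hb, by
          rw [Set.mem_inv, inv_eq_of_mul_eq_one_right hbbone]; exact hb'⟩
        rw [h2.2] at this; exact this
      rw [← hab, ha1, hb1, one_mul]
    · rintro rfl
      have h1' := one_mem_of_isPosCone h1
      have h2' := one_mem_of_isPosCone h2
      have : (1 : G) ∈ P₁ * P₂ := by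
        have := Set.mul_mem_mul h1' h2'
        simpa using this
      exact ⟨this, by rw [Set.mem_inv]; simpa using this⟩

theorem stmt_2 {G : Type*} [CommGroup G] (P₁ P₂ : Set G)
    (h1 : IsPosCone P₁) (h2 : IsPosCone P₂) :
    ((∃ P : Set G, IsPosCone P ∧ P₁ ⊆ P ∧ P₂ ⊆ P ∧
        ∀ Q : Set G, IsPosCone Q → P₁ ⊆ Q → P₂ ⊆ Q → P ⊆ Q) ↔ P₁ ∩ P₂⁻¹ = {1}) ∧
    (P₁ ∩ P₂⁻¹ = {1} →
      ∀ P : Set G, (IsPosCone P ∧ P₁ ⊆ P ∧ P₂ ⊆ P ∧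
        ∀ Q : Set G, IsPosCone Q → P₁ ⊆ Q → P₂ ⊆ Q → P ⊆ Q) →
        P = P₁ ∪ P₂ ∪ P₁ * P₂) := by
  have one1 := one_mem_of_isPosCone h1
  have one2 := one_mem_of_isPosCone h2
  have hsub1 : P₁ ⊆ P₁ * P₂ := fun a ha => by
    have := Set.mul_mem_mul ha one2; simpa using this
  have hsub2 : P₂ ⊆ P₁ * P₂ := fun b hb => by
    have := Set.mul_mem_mul one1 hb; simpa using this
  have hmin : ∀ Q : Set G, IsPosCone Q → P₁ ⊆ Q → P₂ ⊆ Q → P₁ * P₂ ⊆ Q :=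
    fun Q hQ hQ1 hQ2 => (Set.mul_subset_mul hQ1 hQ2).trans hQ.1
  constructor
  · constructor
    · rintro ⟨P, hP, hP1, hP2, _⟩
      apply subset_antisymm
      · intro x ⟨hx1, hx2⟩
        have : x ∈ P ∩ P⁻¹ := ⟨hP1 hx1, Set.inv_subset_inv.mpr hP2 hx2⟩
        rw [hP.2] at this; exact this
      · rintro x rfl
        exact ⟨one1, by rw [Set.mem_inv]; simpa using one2⟩
    · intro hint
      exact ⟨P₁ * P₂, mul_isPosCone h1 h2 hint, hsub1, hsub2, hmin⟩
  · intro hint P ⟨hP, hP1, hP2, hPmin⟩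
    have hcone := mul_isPosCone h1 h2 hint
    have hunion : P₁ ∪ P₂ ∪ P₁ * P₂ = P₁ * P₂ := by
      exact Set.union_eq_self_of_subset_left (Set.union_subset hsub1 hsub2)
    rw [hunion]
    exact subset_antisymm (hPmin _ hcone hsub1 hsub2) (hmin P hP hP1 hP2)
end

section
/- Let X be a totally ordered involutive FLₑ-algebra (involutive commutative residuated chain with constant f), with residual complement x' = x → f. Then for every x ≥ t (where t is the monoidal unit), x → x ≤ x. -/
/-- In a totally ordered involutive FLₑ-algebra, for every `x ≥ t`
(the monoidal unit, written `1`), `x → x ≤ x`. -/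
theorem stmt_4 {X : Type*} [LinearOrder X] [CommMonoid X]
    (himp : X → X → X) (f : X)
    (adj : ∀ x y z : X, x * y ≤ z ↔ y ≤ himp x z)
    (invol : ∀ x : X, himp (himp x f) f = x)
    (x : X) (hx : (1 : X) ≤ x) :
    himp x x ≤ x := by
  -- multiplication is monotone
  have mono : ∀ a b c : X, a ≤ b → a * c ≤ b * c := by
    intro a b c hab
    have hb : b ≤ himp c (b * c) := (adj c b (b * c)).mp (by rw [mul_comm])
    have := (adj c a (b * c)).mpr (le_trans hab hb)
    rwa [mul_comm] at this
  have h1 : x * himp x x ≤ x := (adj x (himp x x) x).mpr le_rfl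
  have h2 : x * himp x f ≤ f := (adj x (himp x f) f).mpr le_rfl
  have step : himp x f * himp x x ≤ f := by
    calc himp x f * himp x x = 1 * (himp x x * himp x f) := by
          rw [one_mul, mul_comm]
      _ ≤ x * (himp x x * himp x f) := by
          exact mono 1 x _ hx
      _ = (x * himp x x) * himp x f := by rw [mul_assoc]
      _ ≤ x * himp x f := mono _ _ _ h1
      _ ≤ f := h2
  have := (adj (himp x f) (himp x x) f).mp step
  rwa [invol x] at this
end

section
/- In a totally ordered involutive FLₑ-chain, for every positive x (x ≥ t), the element x → x is a positive idempotent, and moreover x → x ≤ x; hence the set {x → x : x ∈ X, x ≥ t} equals the set of positive idempotent elements. -/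
/-- In a totally ordered involutive FLₑ-chain, for positive `x` the element
`x → x` is a positive idempotent with `x → x ≤ x`; consequently
`{x → x : x ≥ t}` is exactly the set of positive idempotents. -/
theorem stmt_8 {X : Type*} [LinearOrder X] [CommMonoid X]
    (himp : X → X → X) (f : X)
    (adj : ∀ x y z : X, x * y ≤ z ↔ y ≤ himp x z)
    (invol : ∀ x : X, himp (himp x f) f = x) :
    (∀ x : X, (1 : X) ≤ x →
      (1 : X) ≤ himp x x ∧ himp x x * himp x x = himp x x ∧ himp x x ≤ x) ∧
    {u : X | ∃ x : X, (1 : X) ≤ x ∧ u = himp x x} = {u : X | (1 : X) ≤ u ∧ u * u = u} := by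
  -- multiplication is monotone in the right argument
  have mono : ∀ a y y' : X, y ≤ y' → a * y ≤ a * y' := by
    intro a y y' h
    exact (adj a y (a * y')).mpr (h.trans ((adj a y' (a * y')).mp le_rfl))
  -- counit
  have counit : ∀ x : X, x * himp x x ≤ x := fun x => (adj x _ x).mpr le_rfl
  have pos : ∀ x : X, (1 : X) ≤ himp x x := by
    intro x
    exact (adj x 1 x).mp (by simp)
  have main : ∀ x : X, (1 : X) ≤ x →
      (1 : X) ≤ himp x x ∧ himp x x * himp x x = himp x x ∧ himp x x ≤ x := by
    intro x hx
    refine ⟨pos x, ?_, ?_⟩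
    · apply le_antisymm
      · -- e*e ≤ e  iff  x*(e*e) ≤ x
        refine (adj x _ x).mp ?_
        calc x * (himp x x * himp x x) = (x * himp x x) * himp x x := by
              rw [mul_assoc]
          _ ≤ x * himp x x := by
              rw [mul_comm (x * himp x x) (himp x x), mul_comm x (himp x x)]
              exact mono _ _ _ (by rw [mul_comm]; exact counit x)
          _ ≤ x := counit x
      · calc himp x x = 1 * himp x x := (one_mul _).symm
          _ = himp x x * 1 := mul_comm _ _
          _ ≤ himp x x * himp x x := mono _ _ _ (pos x)
    · calc himp x x = 1 * himp x x := (one_mul _).symm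
        _ ≤ x * himp x x := by
            rw [mul_comm 1, mul_comm x]; exact mono _ _ _ hx
        _ ≤ x := counit x
  refine ⟨main, ?_⟩
  ext u
  simp only [Set.mem_setOf_eq]
  constructor
  · rintro ⟨x, hx, rfl⟩
    exact ⟨(main x hx).1, (main x hx).2.1⟩
  · rintro ⟨hu, hid⟩
    refine ⟨u, hu, le_antisymm ?_ (main u hu).2.2⟩
    exact (adj u u u).mp (le_of_eq hid)
end

section
/- Let ⟨Gᵤ, ς_{u→v}⟩ be a direct system of totally ordered abelian groups over a totally ordered index set κ, with order-preserving homomorphisms, such that for all u ≤ v the preimage under ς_{u→v} of any strictly positive element of G_v is strictly positive in Gᵤ. Fix s ∈ κ and a total order on G_s extending its given order, with positive cone P̃_s ⊇ P_s. For v > s define P̃_v = ς_{s→v}(P̃_s). Then for every v > s, P̃_v is a positive cone of a partial order on G_v, i.e., P̃_v·P̃_v ⊆ P̃_v and P̃_v ∩ P̃_v⁻¹ = {1}. -/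
open Pointwise

/-- Direct system of abelian o-groups over a totally ordered index set, in
which preimages of strictly positive elements are strictly positive.  Given a
total-order cone `P̃ₛ ⊇ Pₛ` on `Gₛ`, the sets `P̃ᵥ = ς_{s→v}(P̃ₛ)` (for
`v > s`) are positive cones of partial orders on `Gᵥ`. -/
theorem stmt_11 {κ : Type*} [LinearOrder κ]
    {G : κ → Type*} [∀ u, CommGroup (G u)] [∀ u, LinearOrder (G u)]
    [∀ u, CovariantClass (G u) (G u) (· * ·) (· ≤ ·)]
    (ς : ∀ u v, u ≤ v → G u →* G v)
    (hid : ∀ u, ς u u le_rfl = MonoidHom.id (G u))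
    (hcomp : ∀ u v w (h1 : u ≤ v) (h2 : v ≤ w) (x : G u),
      ς v w h2 (ς u v h1 x) = ς u w (h1.trans h2) x)
    (hmono : ∀ u v (h : u ≤ v) (x y : G u), x ≤ y → ς u v h x ≤ ς u v h y)
    (hpre : ∀ u v (h : u ≤ v) (x : G u), 1 < ς u v h x → 1 < x)
    (s : κ) (Ptilde : Set (G s))
    (hPmul : Ptilde * Ptilde ⊆ Ptilde)
    (hPanti : Ptilde ∩ Ptilde⁻¹ = {1})
    (hPtotal : ∀ x : G s, x ∈ Ptilde ∨ x⁻¹ ∈ Ptilde)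
    (hPext : {x : G s | 1 ≤ x} ⊆ Ptilde)
    (v : κ) (hv : s < v) :
    (ς s v hv.le '' Ptilde) * (ς s v hv.le '' Ptilde) ⊆ ς s v hv.le '' Ptilde ∧
    (ς s v hv.le '' Ptilde) ∩ (ς s v hv.le '' Ptilde)⁻¹ = {1} := by
  constructor
  · rintro z ⟨_, ⟨a, ha, rfl⟩, _, ⟨b, hb, rfl⟩, rfl⟩
    exact ⟨a * b, hPmul ⟨a, ha, b, hb, rfl⟩, map_mul _ _ _⟩
  · ext y
    simp only [Set.mem_inter_iff, Set.mem_inv, Set.mem_image, Set.mem_singleton_iff]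
    constructor
    · rintro ⟨⟨a, ha, rfl⟩, b, hb, hb'⟩
      by_contra hne
      rcases lt_or_gt_of_ne hne with h | h
      · -- ς a < 1, so a < 1, so a⁻¹ ∈ Ptilde, so a = 1
        have ha1 : a < 1 := by
          by_contra h'
          exact absurd (hmono s v hv.le 1 a (not_lt.mp h')) (by simpa using h.not_ge)
        have : a ∈ Ptilde ∩ Ptilde⁻¹ := ⟨ha, hPext (le_of_lt (by simpa using ha1))⟩
        rw [hPanti] at this
        exact absurd this ha1.ne
      · have hb1' : ς s v hv.le b < 1 := by
          rw [hb']; simpa using h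
        have hb1 : b < 1 := by
          by_contra h'
          exact absurd (hmono s v hv.le 1 b (not_lt.mp h')) (by simpa using hb1'.not_ge)
        have : b ∈ Ptilde ∩ Ptilde⁻¹ := ⟨hb, hPext (le_of_lt (by simpa using hb1))⟩
        rw [hPanti] at this
        exact absurd this hb1.ne
    · rintro rfl
      have h1 : (1 : G s) ∈ Ptilde := hPext le_rfl
      exact ⟨⟨1, h1, map_one _⟩, 1, h1, by simp⟩
end

section
/- Under the hypotheses of the previous setting (direct system of abelian o-groups with preimages of strictly positive elements strictly positive, P̃_s ⊇ P_s a total order cone on G_s, P̃_v = ς_{s→v}(P̃_s) for v > s), for every v > s it holds that P̃_v⁻¹ ∩ P_v = {1}, where P_v is the original positive cone of G_v. -/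
open Pointwise

/-- Under the same hypotheses as before, for `v > s` one has
`P̃ᵥ⁻¹ ∩ Pᵥ = {1}`, where `Pᵥ` is the original positive cone of `Gᵥ` and
`P̃ᵥ = ς_{s→v}(P̃ₛ)`. -/
theorem stmt_12 {κ : Type*} [LinearOrder κ]
    {G : κ → Type*} [∀ u, CommGroup (G u)] [∀ u, LinearOrder (G u)]
    [∀ u, CovariantClass (G u) (G u) (· * ·) (· ≤ ·)]
    (ς : ∀ u v, u ≤ v → G u →* G v)
    (hid : ∀ u, ς u u le_rfl = MonoidHom.id (G u))
    (hcomp : ∀ u v w (h1 : u ≤ v) (h2 : v ≤ w) (x : G u),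
      ς v w h2 (ς u v h1 x) = ς u w (h1.trans h2) x)
    (hmono : ∀ u v (h : u ≤ v) (x y : G u), x ≤ y → ς u v h x ≤ ς u v h y)
    (hpre : ∀ u v (h : u ≤ v) (x : G u), 1 < ς u v h x → 1 < x)
    (s : κ) (Ptilde : Set (G s))
    (hPmul : Ptilde * Ptilde ⊆ Ptilde)
    (hPanti : Ptilde ∩ Ptilde⁻¹ = {1})
    (hPtotal : ∀ x : G s, x ∈ Ptilde ∨ x⁻¹ ∈ Ptilde)
    (hPext : {x : G s | 1 ≤ x} ⊆ Ptilde)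
    (v : κ) (hv : s < v) :
    (ς s v hv.le '' Ptilde)⁻¹ ∩ {x : G v | 1 ≤ x} = {1} := by
  ext x
  simp only [Set.mem_inter_iff, Set.mem_inv, Set.mem_image, Set.mem_setOf_eq,
    Set.mem_singleton_iff]
  constructor
  · rintro ⟨⟨p, hp, hpx⟩, hx1⟩
    -- x⁻¹ = ς p, and 1 ≤ x, i.e. ς p ≤ 1
    have hle : ς s v hv.le p ≤ 1 := by
      rw [hpx]; exact inv_le_one'.mpr hx1
    have heq : ς s v hv.le p = 1 := by
      rcases lt_or_eq_of_le hle with hlt | h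
      · exfalso
        have h1 : 1 < ς s v hv.le p⁻¹ := by
          rw [map_inv]; exact one_lt_inv_of_inv hlt
        have h2 : 1 < p⁻¹ := hpre s v hv.le _ h1
        have h3 : p⁻¹ ∈ Ptilde := hPext h2.le
        have h4 : p ∈ Ptilde ∩ Ptilde⁻¹ := ⟨hp, by simpa using h3⟩
        rw [hPanti] at h4
        simp only [Set.mem_singleton_iff] at h4
        subst h4
        simp at hlt
      · exact h
    rw [hpx] at heq
    simpa using congrArg (·⁻¹) heq
  · rintro rfl
    refine ⟨⟨1, hPext le_rfl, by simp⟩, le_rfl⟩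
end

section
/- Any partial order of an abelian group G can be extended to a total order making G a totally ordered abelian group if and only if G is torsion-free. -/
/-- Every translation-invariant partial order on an abelian group `G` extends
to a translation-invariant total order if and only if `G` is torsion-free. -/
theorem stmt_15 {G : Type*} [AddCommGroup G] :
    (∀ r : G → G → Prop, IsPartialOrder G r →
      (∀ x y z : G, r x y → r (x + z) (y + z)) →
      ∃ t : G → G → Prop, IsLinearOrder G t ∧
        (∀ x y z : G, t x y → t (x + z) (y + z)) ∧
        ∀ x y : G, r x y → t x y) ↔
    (∀ (n : ℕ) (g : G), 0 < n → n • g = 0 → g = 0) := by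
  constructor
  · intro h n g hn hg
    have hpo : IsPartialOrder G (fun x y : G => x = y) :=
      { refl := fun a => rfl, trans := fun a b c h1 h2 => h1.trans h2,
        antisymm := fun a b h1 _ => h1 }
    obtain ⟨t, ht, htinv, -⟩ := h (fun x y => x = y) hpo (fun x y z h1 => by rw [h1])
    haveI := ht
    -- from t 0 g, chains of multiples
    have chain : ∀ g : G, t 0 g → ∀ m : ℕ, t 0 (m • g) := by
      intro g h0g m
      induction m with
      | zero => simpa using Std.Refl.refl (r := t) 0
      | succ k ih =>
        have h3 := htinv 0 g (k • g) h0g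
        rw [zero_add, add_comm] at h3
        rw [succ_nsmul]
        exact IsTrans.trans _ _ _ ih h3
    have main : ∀ m : ℕ, ∀ g : G, 0 < m → t 0 g → m • g = 0 → g = 0 := by
      intro m
      induction m using Nat.strong_induction_on with
      | _ m ih =>
        intro g hm h0g hmg
        rcases Nat.eq_or_lt_of_le hm with h1 | h2
        · simpa [← h1] using hmg
        · -- m ≥ 2
          have hpred : t 0 ((m - 1) • g) := chain g h0g (m - 1)
          have hstep : t ((m - 1) • g) ((m - 1) • g + g) := by
            have := htinv 0 g ((m - 1) • g) h0g
            rwa [zero_add, add_comm] at this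
          have hmeq : (m - 1) • g + g = m • g := by
            rw [← succ_nsmul, Nat.sub_add_cancel hm]
          rw [hmeq, hmg] at hstep
          have hz : (m - 1) • g = 0 := Std.Antisymm.antisymm _ _ hstep hpred
          exact ih (m - 1) (by omega) g (by omega) h0g hz
    rcases Std.Total.total (r := t) 0 g with h0g | hg0
    · exact main n g hn h0g hg
    · have h0g' : t 0 (-g) := by
        have := htinv g 0 (-g) hg0
        rwa [add_neg_cancel, zero_add] at this
      have : (-g) = 0 := main n (-g) hn h0g' (by rw [smul_neg, hg, neg_zero])
      simpa using this
  · intro tf r hr hinv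
    haveI := hr
    set C : Set G := {g | r 0 g} with hCdef
    set P : Set G → Prop := fun S => 0 ∈ S ∧ (∀ a ∈ S, ∀ b ∈ S, a + b ∈ S) ∧ C ⊆ S ∧
      ∀ x ∈ S, -x ∈ S → x = 0 with hPdef
    have hPC : P C := by
      refine ⟨Std.Refl.refl (r := r) 0, ?_, subset_rfl, ?_⟩
      · intro a ha b hb
        have := hinv 0 b a hb
        rw [zero_add] at this
        exact IsTrans.trans _ _ _ ha (by rwa [add_comm])
      · intro x hx hnx
        have h1 : r x 0 := by
          have := hinv 0 (-x) x hnx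
          rwa [zero_add, neg_add_cancel] at this
        exact Std.Antisymm.antisymm _ _ h1 hx
    have hub : ∀ c ⊆ {S | P S}, IsChain (· ⊆ ·) c → c.Nonempty →
        ∃ ub ∈ {S | P S}, ∀ s ∈ c, s ⊆ ub := by
      intro c hc hchain hne
      refine ⟨⋃₀ c, ⟨?_, ?_, ?_, ?_⟩, fun s hs => Set.subset_sUnion_of_mem hs⟩
      · obtain ⟨S, hS⟩ := hne
        exact ⟨S, hS, (hc hS).1⟩
      · rintro a ⟨S1, hS1, ha⟩ b ⟨S2, hS2, hb⟩
        rcases hchain.total hS1 hS2 with h12 | h21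
        · exact ⟨S2, hS2, (hc hS2).2.1 _ (h12 ha) _ hb⟩
        · exact ⟨S1, hS1, (hc hS1).2.1 _ ha _ (h21 hb)⟩
      · obtain ⟨S, hS⟩ := hne
        exact ((hc hS).2.2.1).trans (Set.subset_sUnion_of_mem hS)
      · rintro x ⟨S1, hS1, hx⟩ ⟨S2, hS2, hnx⟩
        rcases hchain.total hS1 hS2 with h12 | h21
        · exact (hc hS2).2.2.2 _ (h12 hx) hnx
        · exact (hc hS1).2.2.2 _ hx (h21 hnx)
    obtain ⟨M, hCM, hPM, hmax⟩ := zorn_subset_nonempty {S | P S} hub C hPC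
    · -- M is maximal positive cone; show totality, then build t
      obtain ⟨h0M, haddM, hCsubM, hconeM⟩ := hPM
      have hsmulM : ∀ x ∈ M, ∀ n : ℕ, n • x ∈ M := by
        intro x hx n
        induction n with
        | zero => simpa using h0M
        | succ k ih => rw [succ_nsmul]; exact haddM _ ih _ hx
      have key : ∀ h : G, h ∉ M → ∃ c ∈ M, ∃ k : ℕ, 0 < k ∧ c + k • h = 0 := by
        intro g hg
        set M' : Set G := {y | ∃ c ∈ M, ∃ n : ℕ, y = c + n • g} with hM'def
        have hMM' : M ⊆ M' := fun c hc => ⟨c, hc, 0, by simp⟩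
        have h0M' : (0 : G) ∈ M' := hMM' h0M
        have haddM' : ∀ a ∈ M', ∀ b ∈ M', a + b ∈ M' := by
          rintro a ⟨c1, hc1, n1, rfl⟩ b ⟨c2, hc2, n2, rfl⟩
          exact ⟨c1 + c2, haddM _ hc1 _ hc2, n1 + n2, by rw [add_smul]; abel⟩
        by_cases hcone : ∀ x ∈ M', -x ∈ M' → x = 0
        · exfalso
          have hPM' : P M' := ⟨h0M', haddM', hCsubM.trans hMM', hcone⟩
          have : M' ⊆ M := hmax hPM' hMM'
          exact hg (this ⟨0, h0M, 1, by simp⟩)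
        · push_neg at hcone
          obtain ⟨x, hx, hnx, hxne⟩ := hcone
          obtain ⟨c1, hc1, n1, hx1⟩ := hx
          obtain ⟨c2, hc2, n2, hx2⟩ := hnx
          have hsum : (c1 + c2) + (n1 + n2) • g = 0 := by
            have h : (c1 + n1 • g) + (c2 + n2 • g) = 0 := by
              rw [← hx1, ← hx2]; exact add_neg_cancel x
            rw [add_smul, show c1 + c2 + (n1 • g + n2 • g) =
              (c1 + n1 • g) + (c2 + n2 • g) from by abel]
            exact h
          rcases Nat.eq_zero_or_pos (n1 + n2) with hz | hpos
          · exfalso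
            obtain ⟨h1, h2⟩ := Nat.add_eq_zero.mp hz
            subst h1; subst h2
            simp only [zero_smul, add_zero] at hx1 hx2
            subst hx1
            exact hxne (hconeM _ hc1 (hx2 ▸ hc2))
          · exact ⟨c1 + c2, haddM _ hc1 _ hc2, n1 + n2, hpos, hsum⟩
      have htotal : ∀ g : G, g ∈ M ∨ -g ∈ M := by
        intro g
        by_contra hcon
        push_neg at hcon
        obtain ⟨hg, hng⟩ := hcon
        obtain ⟨c, hc, k, hk, hck⟩ := key g hg
        obtain ⟨c', hc', k', hk', hck'⟩ := key (-g) hng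
        -- k • g = -c,  k' • (-g) = -c'  i.e. k' • g = c'
        have h1 : k • g = -c := eq_neg_of_add_eq_zero_right hck
        have h2 : (k' : ℕ) • g = c' := by
          have h3 : k' • (-g) = -c' := eq_neg_of_add_eq_zero_right hck'
          rw [smul_neg] at h3
          exact neg_injective h3
        have hA : (k * k') • g ∈ M := by
          rw [mul_smul, h2]
          exact hsmulM _ hc' k
        have hB : -((k * k') • g) ∈ M := by
          rw [mul_comm, mul_smul, h1, smul_neg, neg_neg]
          exact hsmulM _ hc k'
        have := hconeM _ hA hB
        have hg0 : g = 0 := tf (k * k') g (Nat.mul_pos hk hk') this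
        exact hg (hg0 ▸ h0M)
      refine ⟨fun x y => y - x ∈ M, ?_, ?_, ?_⟩
      · exact
          { refl := fun a => by simpa using h0M
            trans := fun a b c h1 h2 => by
              have := haddM _ h1 _ h2
              rwa [show b - a + (c - b) = c - a by abel] at this
            antisymm := fun a b h1 h2 => by
              have : b - a = 0 := hconeM _ h1 (by rwa [neg_sub])
              exact (sub_eq_zero.mp this).symm
            total := fun a b => by
              rcases htotal (b - a) with h1 | h1
              · exact Or.inl h1
              · exact Or.inr (by rwa [neg_sub] at h1) }
      · intro x y z h1
        rwa [show y + z - (x + z) = y - x by abel]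
      · intro x y hxy
        apply hCsubM
        have := hinv x y (-x) hxy
        rwa [add_neg_cancel, ← sub_eq_add_neg] at this
end

section
/- In a direct system ⟨Gᵤ, ς_{u→v}⟩ of partially ordered abelian groups over a totally ordered index set, define for each u: Q̄ᵤ = {x ∈ Gᵤ : ς_{u→v}(x) is strictly positive in G_v for some v ≥ u}. Then Q̄ᵤ·Q̄ᵤ ⊆ Q̄ᵤ and Q̄ᵤ ∩ Q̄ᵤ⁻¹ = ∅, so Q̄ᵤ ∪ {1} is the positive cone of a partial order on Gᵤ extending the original one. -/
open Pointwise

/-- In a direct system of partially ordered abelian groups over a totally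
ordered index set, the set `Q̄ᵤ` of elements with strictly positive image in
some later layer is a strict positive cone, and `Q̄ᵤ ∪ {1}` is the positive
cone of a partial order on `Gᵤ` extending the original one. -/
theorem stmt_18 {κ : Type*} [LinearOrder κ]
    {G : κ → Type*} [∀ u, CommGroup (G u)] [∀ u, PartialOrder (G u)]
    [∀ u, CovariantClass (G u) (G u) (· * ·) (· ≤ ·)]
    (ς : ∀ u v, u ≤ v → G u →* G v)
    (hid : ∀ u, ς u u le_rfl = MonoidHom.id (G u))
    (hcomp : ∀ u v w (h1 : u ≤ v) (h2 : v ≤ w) (x : G u),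
      ς v w h2 (ς u v h1 x) = ς u w (h1.trans h2) x)
    (hmono : ∀ u v (h : u ≤ v) (x y : G u), x ≤ y → ς u v h x ≤ ς u v h y)
    (u : κ) (Qbar : Set (G u))
    (hQbar : Qbar = {x : G u | ∃ v, ∃ h : u ≤ v, 1 < ς u v h x}) :
    Qbar * Qbar ⊆ Qbar ∧
    Qbar ∩ Qbar⁻¹ = ∅ ∧
    (Qbar ∪ {1}) * (Qbar ∪ {1}) ⊆ Qbar ∪ {1} ∧
    (Qbar ∪ {1}) ∩ (Qbar ∪ {1})⁻¹ = {1} ∧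
    {x : G u | 1 ≤ x} ⊆ Qbar ∪ {1} := by
  subst hQbar
  -- key: positivity is preserved (non-strictly) under later maps
  have key : ∀ (x : G u) (v : κ) (h : u ≤ v), 1 < ς u v h x →
      ∀ (w : κ) (h2 : v ≤ w), 1 ≤ ς u w (h.trans h2) x := by
    intro x v h hx w h2
    have := hmono v w h2 1 (ς u v h x) hx.le
    rwa [map_one, hcomp] at this
  have hmul : ∀ x ∈ {x : G u | ∃ v, ∃ h : u ≤ v, 1 < ς u v h x},
      ∀ y ∈ {x : G u | ∃ v, ∃ h : u ≤ v, 1 < ς u v h x},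
      x * y ∈ {x : G u | ∃ v, ∃ h : u ≤ v, 1 < ς u v h x} := by
    rintro x ⟨v1, h1, hx⟩ y ⟨v2, h2, hy⟩
    rcases le_total v1 v2 with hv | hv
    · refine ⟨v2, h2, ?_⟩
      have hx' : 1 ≤ ς u v2 h2 x := by
        have := key x v1 h1 hx v2 hv; convert this using 2
      calc (1 : G v2) < ς u v2 h2 y := hy
        _ ≤ ς u v2 h2 x * ς u v2 h2 y := le_mul_of_one_le_left' hx'
        _ = ς u v2 h2 (x * y) := (map_mul _ _ _).symm
    · refine ⟨v1, h1, ?_⟩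
      have hy' : 1 ≤ ς u v1 h1 y := by
        have := key y v2 h2 hy v1 hv; convert this using 2
      calc (1 : G v1) < ς u v1 h1 x := hx
        _ ≤ ς u v1 h1 x * ς u v1 h1 y := le_mul_of_one_le_right' hy'
        _ = ς u v1 h1 (x * y) := (map_mul _ _ _).symm
  have hdisj : ∀ x : G u, x ∈ {x : G u | ∃ v, ∃ h : u ≤ v, 1 < ς u v h x} →
      x⁻¹ ∈ {x : G u | ∃ v, ∃ h : u ≤ v, 1 < ς u v h x} → False := by
    rintro x ⟨v1, h1, hx⟩ ⟨v2, h2, hxi⟩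
    rcases le_total v1 v2 with hv | hv
    · have hx' : 1 ≤ ς u v2 h2 x := by
        have := key x v1 h1 hx v2 hv; convert this using 2
      rw [map_inv] at hxi
      have hlt : ς u v2 h2 x < 1 := by simpa using hxi
      exact absurd hx' hlt.not_ge
    · have hxi' : 1 ≤ ς u v1 h1 x⁻¹ := by
        have := key x⁻¹ v2 h2 hxi v1 hv; convert this using 2
      rw [map_inv] at hxi'
      have hle : ς u v1 h1 x ≤ 1 := by simpa using hxi'
      exact absurd hx hle.not_gt
  refine ⟨?_, ?_, ?_, ?_, ?_⟩
  · rintro z ⟨x, hx, y, hy, rfl⟩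
    exact hmul x hx y hy
  · ext x
    simp only [Set.mem_inter_iff, Set.mem_inv, Set.mem_empty_iff_false, iff_false, not_and]
    intro hx hxi
    exact hdisj x hx hxi
  · rintro z ⟨x, hx, y, hy, rfl⟩
    rcases hx with hx | hx <;> rcases hy with hy | hy
    · exact Or.inl (hmul x hx y hy)
    · rcases hy with rfl; simp only [mul_one]; exact Or.inl hx
    · rcases hx with rfl; simp only [one_mul]; exact Or.inl hy
    · rcases hx with rfl; rcases hy with rfl; simp
  · ext x
    simp only [Set.mem_inter_iff, Set.mem_union, Set.mem_inv, Set.mem_singleton_iff]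
    constructor
    · rintro ⟨hx | rfl, hxi | hxi⟩
      · exact (hdisj x hx hxi).elim
      · simpa using congrArg Inv.inv hxi
      · exact (hdisj 1 (by simpa using hxi) (by simpa using hxi)).elim
      · rfl
    · rintro rfl; exact ⟨Or.inr rfl, Or.inr (by simp)⟩
  · intro x hx
    rcases eq_or_lt_of_le hx with heq | hlt
    · exact Or.inr heq.symm
    · refine Or.inl ⟨u, le_rfl, ?_⟩
      rw [hid]; exact hlt
end
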